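/- Let a, b be real numbers with 0 < b < a. Define ξ₁ := √a·i ∈ ℂ and ξ₂ := (a−b)/(a(1+b)) + (√((1+a)·b·(a−b))/(a(1+b)))·i ∈ ℂ. Define the 6×6 real matrix S with rows: (0, 0, 1, 1/a, (a−b)/(a(1+b)), 1); (1, 0, 0, 1, a, a(1+a)(1+b)/(a−b)); ((1+b)/b, 1, 0, 0, 1, a(1+b)²/(b(a−b))); (1, (1+a)b/(a(1+b)), 1, 0, 0, 1); (1, 1, a(1+b)/b, 1, 0, 0); (0, 1, a²(1+b)²/(b(a−b)), (1+a)(1+b)/(a−b), 1, 0). Define the 6×6 complex matrix M with rows: (0, 0, 1, 1/ξ₁, ξ₂, 1); (1, 0, 0, 1, ξ₁, (1+ξ₁)/ξ₂); ((1+ξ₁)/(ξ₁(1−ξ₂)), 1, 0, 0, 1, (1+ξ₁)/(ξ₁ξ₂(1−ξ₂))); (1, 1−ξ₂, 1, 0, 0, 1); (1, 1, (1+ξ₁)/(1−ξ₂), 1, 0, 0); (0, 1, (1+ξ₁)/(ξ₂(1−ξ₂)), (1+ξ₁)/(ξ₁ξ₂), 1, 0). Then S_{ij} = |M_{ij}|²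 for all i, j, rank M = 3, and rank S = 3. -/

import Mathlib

section PappusHelpers

variable {α : Type*} (x0 x1 x2 x3 x4 x5 : α) (y0 y1 y2 : α)

lemma pappus_cv0 : ![x0,x1,x2,x3,x4,x5] (0 : Fin 6) = x0 := rfl
lemma pappus_cv1 : ![x0,x1,x2,x3,x4,x5] (1 : Fin 6) = x1 := rfl
lemma pappus_cv2 : ![x0,x1,x2,x3,x4,x5] (2 : Fin 6) = x2 := rfl
lemma pappus_cv3 : ![x0,x1,x2,x3,x4,x5] (3 : Fin 6) = x3 := rfl
lemma pappus_cv4 : ![x0,x1,x2,x3,x4,x5] (4 : Fin 6) = x4 := rfl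
lemma pappus_cv5 : ![x0,x1,x2,x3,x4,x5] (5 : Fin 6) = x5 := rfl
lemma pappus_cw0 : ![y0,y1,y2] (0 : Fin 3) = y0 := rfl
lemma pappus_cw1 : ![y0,y1,y2] (1 : Fin 3) = y1 := rfl
lemma pappus_cw2 : ![y0,y1,y2] (2 : Fin 3) = y2 := rfl
lemma pappus_cv0' : ![x0,x1,x2,x3,x4,x5] (⟨0, by omega⟩ : Fin 6) = x0 := rfl
lemma pappus_cv1' : ![x0,x1,x2,x3,x4,x5] (⟨1, by omega⟩ : Fin 6) = x1 := rfl
lemma pappus_cv2' : ![x0,x1,x2,x3,x4,x5] (⟨2, by omega⟩ : Fin 6) = x2 := rfl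
lemma pappus_cv3' : ![x0,x1,x2,x3,x4,x5] (⟨3, by omega⟩ : Fin 6) = x3 := rfl
lemma pappus_cv4' : ![x0,x1,x2,x3,x4,x5] (⟨4, by omega⟩ : Fin 6) = x4 := rfl
lemma pappus_cv5' : ![x0,x1,x2,x3,x4,x5] (⟨5, by omega⟩ : Fin 6) = x5 := rfl
lemma pappus_cw0' : ![y0,y1,y2] (⟨0, by omega⟩ : Fin 3) = y0 := rfl
lemma pappus_cw1' : ![y0,y1,y2] (⟨1, by omega⟩ : Fin 3) = y1 := rfl
lemma pappus_cw2' : ![y0,y1,y2] (⟨2, by omega⟩ : Fin 3) = y2 := rfl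

/-- If a `6 × 6` matrix over a field factors through `Fin 3` and has an invertible
`3 × 3` "submatrix" (realized by multiplication with selection matrices), then its
rank is `3`. -/
lemma pappus_rank_eq_three_of_factor {F : Type*} [Field F]
    (M : Matrix (Fin 6) (Fin 6) F) (A : Matrix (Fin 6) (Fin 3) F)
    (B : Matrix (Fin 3) (Fin 6) F) (Q : Matrix (Fin 6) (Fin 3) F)
    (hAB : M = A * B) (hBM : ∃ P : Matrix (Fin 3) (Fin 6) F, P * M = B)
    (hdet : (B * Q).det ≠ 0) :
    M.rank = 3 := by
  obtain ⟨P, hPB⟩ := hBM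
  have hle : M.rank ≤ 3 := by
    rw [hAB]
    refine (Matrix.rank_mul_le_right _ _).trans ?_
    simpa using Matrix.rank_le_card_height B
  have h3 : (B * Q).rank = 3 := by
    rw [Matrix.rank_of_isUnit _ ((Matrix.isUnit_iff_isUnit_det _).2 hdet.isUnit)]
    simp
  have hge : 3 ≤ M.rank := by
    calc 3 = (B * Q).rank := h3.symm
      _ ≤ B.rank := Matrix.rank_mul_le_left _ _
      _ = (P * M).rank := by rw [hPB]
      _ ≤ M.rank := Matrix.rank_mul_le_right _ _
  omega

end PappusHelpers

set_option maxHeartbeats 4000000 in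
/-- Sufficiency direction of **Proposition 3.5**: every Pappus hexagon is complex
psd-minimal. For parameters `0 < b < a`, the explicit scaled slack matrix `S` of the
Pappus hexagon admits the Hadamard factorization `S = M ⊙ conj(M)` with `rank M = 3`
(and `rank S = 3`). -/
theorem stmt_9 (a b : ℝ) (hb : 0 < b) (hba : b < a)
    (ξ1 ξ2 : ℂ)
    (hξ1 : ξ1 = (Real.sqrt a : ℝ) * Complex.I)
    (hξ2 : ξ2 = ((a - b) / (a * (1 + b)) : ℝ)
        + ((Real.sqrt ((1 + a) * b * (a - b)) / (a * (1 + b)) : ℝ)) * Complex.I)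
    (S : Matrix (Fin 6) (Fin 6) ℝ)
    (hS : S = !![0, 0, 1, 1 / a, (a - b) / (a * (1 + b)), 1;
                 1, 0, 0, 1, a, a * (1 + a) * (1 + b) / (a - b);
                 (1 + b) / b, 1, 0, 0, 1, a * (1 + b) ^ 2 / (b * (a - b));
                 1, (1 + a) * b / (a * (1 + b)), 1, 0, 0, 1;
                 1, 1, a * (1 + b) / b, 1, 0, 0;
                 0, 1, a ^ 2 * (1 + b) ^ 2 / (b * (a - b)), (1 + a) * (1 + b) / (a - b), 1, 0])
    (M : Matrix (Fin 6) (Fin 6) ℂ)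
    (hM : M = !![0, 0, 1, 1 / ξ1, ξ2, 1;
                 1, 0, 0, 1, ξ1, (1 + ξ1) / ξ2;
                 (1 + ξ1) / (ξ1 * (1 - ξ2)), 1, 0, 0, 1, (1 + ξ1) / (ξ1 * ξ2 * (1 - ξ2));
                 1, 1 - ξ2, 1, 0, 0, 1;
                 1, 1, (1 + ξ1) / (1 - ξ2), 1, 0, 0;
                 0, 1, (1 + ξ1) / (ξ2 * (1 - ξ2)), (1 + ξ1) / (ξ1 * ξ2), 1, 0]) :
    (∀ i j : Fin 6, S i j = Complex.normSq (M i j)) ∧ M.rank = 3 ∧ S.rank = 3 := by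
  have ha : 0 < a := hb.trans hba
  have hab : 0 < a - b := sub_pos.2 hba
  have h1b : (0:ℝ) < 1 + b := by linarith
  have h1a : (0:ℝ) < 1 + a := by linarith
  have ha' : a ≠ 0 := ne_of_gt ha
  have hb' : b ≠ 0 := ne_of_gt hb
  have hab' : a - b ≠ 0 := ne_of_gt hab
  have h1b' : (1:ℝ) + b ≠ 0 := ne_of_gt h1b
  have h1a' : (1:ℝ) + a ≠ 0 := ne_of_gt h1a
  have hsa : Real.sqrt a ^ 2 = a := Real.sq_sqrt ha.le
  have hst : Real.sqrt ((1 + a) * b * (a - b)) ^ 2 = (1 + a) * b * (a - b) :=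
    Real.sq_sqrt (by positivity)
  -- the four basic squared-modulus computations
  have n1 : Complex.normSq ξ1 = a := by
    rw [hξ1, Complex.normSq_mul, Complex.normSq_I, Complex.normSq_ofReal, mul_one, ← sq, hsa]
  have n1' : Complex.normSq (1 + ξ1) = 1 + a := by
    rw [hξ1, show (1 : ℂ) + (Real.sqrt a : ℝ) * Complex.I
        = ((1:ℝ) : ℂ) + (Real.sqrt a : ℝ) * Complex.I by norm_num,
      Complex.normSq_add_mul_I, hsa]
    norm_num
  have n2 : Complex.normSq ξ2 = (a - b) / (a * (1 + b)) := by
    rw [hξ2, Complex.normSq_add_mul_I, div_pow, div_pow, hst]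
    field_simp
    ring
  have n2' : Complex.normSq (1 - ξ2) = (1 + a) * b / (a * (1 + b)) := by
    rw [hξ2, show (1 : ℂ) - (((a - b) / (a * (1 + b)) : ℝ)
        + ((Real.sqrt ((1 + a) * b * (a - b)) / (a * (1 + b)) : ℝ)) * Complex.I)
        = ((1 - (a - b) / (a * (1 + b)) : ℝ) : ℂ)
          + ((-(Real.sqrt ((1 + a) * b * (a - b)) / (a * (1 + b))) : ℝ)) * Complex.I by
        push_cast; ring,
      Complex.normSq_add_mul_I, neg_pow, div_pow, hst]
    field_simp
    ring
  -- nonvanishing facts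
  have z1 : ξ1 ≠ 0 := by
    intro h; rw [h, map_zero] at n1; exact ha' n1.symm
  have z2 : ξ2 ≠ 0 := by
    intro h; rw [h, map_zero] at n2
    exact (div_ne_zero hab' (by positivity)) n2.symm
  have z2' : (1:ℂ) - ξ2 ≠ 0 := by
    intro h; rw [h, map_zero] at n2'
    exact (div_ne_zero (by positivity) (by positivity)) n2'.symm
  refine ⟨?_, ?_, ?_⟩
  · -- Hadamard factorization entrywise
    intro i j
    fin_cases i <;> fin_cases j <;>
      simp only [hS, hM, Matrix.of_apply, pappus_cv0, pappus_cv1, pappus_cv2,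
        pappus_cv3, pappus_cv4, pappus_cv5, pappus_cv0', pappus_cv1', pappus_cv2',
        pappus_cv3', pappus_cv4', pappus_cv5',
        Complex.normSq_div, Complex.normSq_mul, Complex.normSq_one, Complex.normSq_zero] <;>
      first
        | rfl
        | (simp only [n1, n1', n2, n2'] <;> field_simp <;> ring1)
  · -- rank of M is 3
    have f1 : ξ1 * (1 - ξ2) ≠ 0 := mul_ne_zero z1 z2'
    have f2 : ξ2 * (1 - ξ2) ≠ 0 := mul_ne_zero z2 z2'
    have f3 : ξ1 * ξ2 ≠ 0 := mul_ne_zero z1 z2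
    have f4 : ξ1 * ξ2 * (1 - ξ2) ≠ 0 := mul_ne_zero f3 z2'
    have g1 : ξ1 - ξ1 * ξ2 ≠ 0 := by
      intro h; exact f1 (by rw [mul_sub, mul_one]; exact h)
    have g2 : -(ξ2 * ξ1) + ξ1 ≠ 0 := by
      intro h; apply g1; rw [← h]; ring
    have g3 : ξ2 - ξ2 ^ 2 ≠ 0 := by
      intro h; exact f2 (by rw [mul_sub, mul_one, ← sq]; exact h)
    have g4 : -(ξ2 ^ 2) + ξ2 ≠ 0 := by
      intro h; apply g3; rw [← h]; ring
    have g5 : ξ1 * ξ2 - ξ1 * ξ2 ^ 2 * 3 + (ξ1 * ξ2 ^ 3 * 3 - ξ1 * ξ2 ^ 4) ≠ 0 := by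
      have e : ξ1 * ξ2 - ξ1 * ξ2 ^ 2 * 3 + (ξ1 * ξ2 ^ 3 * 3 - ξ1 * ξ2 ^ 4)
          = ξ1 * ξ2 * (1 - ξ2) ^ 3 := by ring
      rw [e]; exact mul_ne_zero f3 (pow_ne_zero _ z2')
    have g6 : ξ1 * ξ2 - ξ1 * ξ2 ^ 2 ≠ 0 := by
      intro h; apply f4; rw [mul_sub, mul_one]; rw [← h]; ring
    set P : Matrix (Fin 3) (Fin 6) ℂ :=
      !![1,0,0,0,0,0; 0,1,0,0,0,0; 0,0,0,1,0,0] with hP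
    set B : Matrix (Fin 3) (Fin 6) ℂ :=
      !![0, 0, 1, 1 / ξ1, ξ2, 1;
         1, 0, 0, 1, ξ1, (1 + ξ1) / ξ2;
         1, 1 - ξ2, 1, 0, 0, 1] with hB
    set A : Matrix (Fin 6) (Fin 3) ℂ :=
      !![1, 0, 0;
         0, 1, 0;
         -(1/(1 - ξ2)), 1/(ξ1*(1 - ξ2)), 1/(1 - ξ2);
         0, 0, 1;
         ξ1/(1 - ξ2), -(ξ2/(1 - ξ2)), 1/(1 - ξ2);
         (1 + ξ1 - ξ2)/(ξ2*(1 - ξ2)), -(1/(1 - ξ2)), 1/(1 - ξ2)] with hA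
    set Q : Matrix (Fin 6) (Fin 3) ℂ :=
      !![1,0,0; 0,1,0; 0,0,1; 0,0,0; 0,0,0; 0,0,0] with hQ
    have hPB : P * M = B := by
      ext i j
      fin_cases i <;> fin_cases j <;>
        simp only [hP, hB, hM, Matrix.mul_apply, Fin.sum_univ_six, Matrix.of_apply,
          pappus_cv0, pappus_cv1, pappus_cv2, pappus_cv3, pappus_cv4, pappus_cv5,
          pappus_cw0, pappus_cw1, pappus_cw2, pappus_cv0', pappus_cv1', pappus_cv2',
          pappus_cv3', pappus_cv4', pappus_cv5', pappus_cw0', pappus_cw1', pappus_cw2'] <;>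
        ring1
    have hAB : M = A * B := by
      rw [hM]
      ext i j
      fin_cases i <;> fin_cases j <;>
        simp only [hA, hB, Matrix.mul_apply, Fin.sum_univ_three, Matrix.of_apply,
          pappus_cv0, pappus_cv1, pappus_cv2, pappus_cv3, pappus_cv4, pappus_cv5,
          pappus_cw0, pappus_cw1, pappus_cw2, pappus_cv0', pappus_cv1', pappus_cv2',
          pappus_cv3', pappus_cv4', pappus_cv5', pappus_cw0', pappus_cw1', pappus_cw2'] <;>
        first
          | rfl
          | ring1
          | (field_simp [z1, z2, z2', g1, g2, g3, g4, g5, g6] <;> ring1)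
          | (ring_nf <;> field_simp [z1, z2, z2', g1, g2, g3, g4, g5, g6] <;> ring1)
    have hNQ : B * Q = !![0, 0, 1; 1, 0, 0; 1, 1 - ξ2, 1] := by
      ext i j
      fin_cases i <;> fin_cases j <;>
        simp only [hB, hQ, Matrix.mul_apply, Fin.sum_univ_six, Matrix.of_apply,
          pappus_cv0, pappus_cv1, pappus_cv2, pappus_cv3, pappus_cv4, pappus_cv5,
          pappus_cw0, pappus_cw1, pappus_cw2, pappus_cv0', pappus_cv1', pappus_cv2',
          pappus_cv3', pappus_cv4', pappus_cv5', pappus_cw0', pappus_cw1', pappus_cw2'] <;>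
        ring1
    have hdet : (B * Q).det ≠ 0 := by
      rw [hNQ, Matrix.det_fin_three]
      simp only [Matrix.of_apply, pappus_cw0, pappus_cw1, pappus_cw2]
      convert z2' using 1
      norm_num [Matrix.vecHead, Matrix.vecTail]
    exact pappus_rank_eq_three_of_factor M A B Q hAB ⟨P, hPB⟩ hdet
  · -- rank of S is 3
    set P : Matrix (Fin 3) (Fin 6) ℝ :=
      !![1,0,0,0,0,0; 0,1,0,0,0,0; 0,0,0,1,0,0] with hP
    set B : Matrix (Fin 3) (Fin 6) ℝ :=
      !![0, 0, 1, 1 / a, (a - b) / (a * (1 + b)), 1;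
         1, 0, 0, 1, a, a * (1 + a) * (1 + b) / (a - b);
         1, (1 + a) * b / (a * (1 + b)), 1, 0, 0, 1] with hB
    set A : Matrix (Fin 6) (Fin 3) ℝ :=
      !![1, 0, 0;
         0, 1, 0;
         -(a*(1 + b)/(b*(1 + a))), (1 + b)/(b*(1 + a)), a*(1 + b)/(b*(1 + a));
         0, 0, 1;
         a^2*(1 + b)/(b*(1 + a)), -((a - b)/(b*(1 + a))), a*(1 + b)/(b*(1 + a));
         a^2*(1 + b)^2/(b*(a - b)) - a*(1 + b)/(b*(1 + a)), -(a*(1 + b)/(b*(1 + a))),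
           a*(1 + b)/(b*(1 + a))] with hA
    set Q : Matrix (Fin 6) (Fin 3) ℝ :=
      !![1,0,0; 0,1,0; 0,0,1; 0,0,0; 0,0,0; 0,0,0] with hQ
    have hPB : P * S = B := by
      ext i j
      fin_cases i <;> fin_cases j <;>
        simp only [hP, hB, hS, Matrix.mul_apply, Fin.sum_univ_six, Matrix.of_apply,
          pappus_cv0, pappus_cv1, pappus_cv2, pappus_cv3, pappus_cv4, pappus_cv5,
          pappus_cw0, pappus_cw1, pappus_cw2, pappus_cv0', pappus_cv1', pappus_cv2',
          pappus_cv3', pappus_cv4', pappus_cv5', pappus_cw0', pappus_cw1', pappus_cw2'] <;>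
        ring1
    have hAB : S = A * B := by
      rw [hS]
      ext i j
      fin_cases i <;> fin_cases j <;>
        simp only [hA, hB, Matrix.mul_apply, Fin.sum_univ_three, Matrix.of_apply,
          pappus_cv0, pappus_cv1, pappus_cv2, pappus_cv3, pappus_cv4, pappus_cv5,
          pappus_cw0, pappus_cw1, pappus_cw2, pappus_cv0', pappus_cv1', pappus_cv2',
          pappus_cv3', pappus_cv4', pappus_cv5', pappus_cw0', pappus_cw1', pappus_cw2'] <;>
        first
          | rfl
          | ring1
          | (field_simp <;> ring1)
          | (ring_nf <;> field_simp <;> ring1)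
    have hNQ : B * Q = !![0, 0, 1; 1, 0, 0; 1, (1 + a) * b / (a * (1 + b)), 1] := by
      ext i j
      fin_cases i <;> fin_cases j <;>
        simp only [hB, hQ, Matrix.mul_apply, Fin.sum_univ_six, Matrix.of_apply,
          pappus_cv0, pappus_cv1, pappus_cv2, pappus_cv3, pappus_cv4, pappus_cv5,
          pappus_cw0, pappus_cw1, pappus_cw2, pappus_cv0', pappus_cv1', pappus_cv2',
          pappus_cv3', pappus_cv4', pappus_cv5', pappus_cw0', pappus_cw1', pappus_cw2'] <;>
        ring1
    have hdet : (B * Q).det ≠ 0 := by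
      rw [hNQ, Matrix.det_fin_three]
      simp only [Matrix.of_apply, pappus_cw0, pappus_cw1, pappus_cw2]
      have : (1 + a) * b / (a * (1 + b)) ≠ 0 := by positivity
      convert this using 1
      norm_num [Matrix.vecHead, Matrix.vecTail]
    exact pappus_rank_eq_three_of_factor S A B Q hAB ⟨P, hPB⟩ hdet
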